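/- Let $(V_n)_{n\geq 1}$ be a time-homogeneous Markov chain with invariant distribution $\bar{\nu}$, stationary under $\overline{\mathbb{P}}$. If for every probability measure $\nu \ll \bar{\nu}$, the law $\mathbb{P}_\nu(V_n \in \cdot)$ of the chain started from $\nu$ converges in total variation to $\bar{\nu}$, then the stationary chain $(V_n)$ is $\overline{\mathbb{P}}$-ergodic (its tail sigma-algebra is $\overline{\mathbb{P}}$-trivial). -/

import Mathlib

open MeasureTheory ProbabilityTheory Filter

/-- Total variation distance `‖P - Q‖ = sup_A |P(A) - Q(A)|` (sup over measurable sets). -/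
noncomputable def tvDist {X : Type*} [MeasurableSpace X] (P Q : Measure X) : ℝ :=
  ⨆ A : {A : Set X // MeasurableSet A}, |(P A.1).toReal - (Q A.1).toReal|

/-- The tail σ-algebra `𝓣_V = ⋂ n σ(V_{n:∞})` of a process. -/
def tailSigma {Ω 𝒱 : Type*} [MeasurableSpace 𝒱] (V : ℕ → Ω → 𝒱) : MeasurableSpace Ω :=
  ⨅ n, ⨆ k, MeasurableSpace.comap (V (n + k)) inferInstance

/-- The law at time `n` of the Markov chain with transition kernel `κ` started from `ν`. -/
noncomputable def chainLaw {𝒱 : Type*} [MeasurableSpace 𝒱] (κ : Kernel 𝒱 𝒱)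
    (ν : Measure 𝒱) : ℕ → Measure 𝒱
  | 0 => ν
  | n + 1 => (chainLaw κ ν n).bind κ

open scoped ENNReal

lemma abs_sub_le_tvDist {X : Type*} [MeasurableSpace X] (P Q : Measure X)
    [IsFiniteMeasure P] [IsFiniteMeasure Q] {A : Set X} (hA : MeasurableSet A) :
    |(P A).toReal - (Q A).toReal| ≤ tvDist P Q := by
  refine le_ciSup (f := fun A : {A : Set X // MeasurableSet A} =>
    |(P A.1).toReal - (Q A.1).toReal|) ?_ ⟨A, hA⟩
  refine ⟨(P Set.univ).toReal + (Q Set.univ).toReal, ?_⟩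
  rintro x ⟨B, rfl⟩
  refine (abs_sub _ _).trans (add_le_add ?_ ?_) <;>
  · rw [abs_of_nonneg ENNReal.toReal_nonneg]
    exact ENNReal.toReal_mono (measure_ne_top _ _) (measure_mono (Set.subset_univ _))

section TV
open Set
set_option maxHeartbeats 1000000 in
lemma abs_integral_sub_le_tvDist {X : Type*} [MeasurableSpace X] (P Q : Measure X)
    [IsProbabilityMeasure P] [IsProbabilityMeasure Q] {f : X → ℝ} (hf : Measurable f)
    (h0 : ∀ x, 0 ≤ f x) (h1 : ∀ x, f x ≤ 1) :
    |∫ x, f x ∂P - ∫ x, f x ∂Q| ≤ tvDist P Q := by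
  have hanti : ∀ (m' : Measure X), Antitone (fun t : ℝ => m' {a | t < f a}) :=
    fun m' s t hst => measure_mono (fun a ha => lt_of_le_of_lt hst ha)
  have hmeas : ∀ (m' : Measure X), Measurable (fun t : ℝ => (m' {a | t < f a}).toReal) :=
    fun m' => ((hanti m').measurable).ennreal_toReal
  have hbd : ∀ (m' : Measure X) [IsProbabilityMeasure m'], ∀ t : ℝ,
      ‖(m' {a | t < f a}).toReal‖ ≤ 1 := by
    intro m' _ t
    rw [Real.norm_eq_abs, abs_of_nonneg ENNReal.toReal_nonneg]
    exact ENNReal.toReal_le_of_le_ofReal zero_le_one (by simpa using prob_le_one)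
  have hintP : ∀ (m' : Measure X) [IsProbabilityMeasure m'],
      IntegrableOn (fun t : ℝ => (m' {a | t < f a}).toReal) (Ioc 0 1) := by
    intro m' _
    exact Integrable.mono' (integrable_const 1) (hmeas m').aestronglyMeasurable.restrict
      (Filter.Eventually.of_forall (hbd m'))
  have hint : ∀ (m : Measure X) [IsProbabilityMeasure m], Integrable f m := by
    intro m _
    exact (integrable_const (1:ℝ)).mono' hf.aestronglyMeasurable
      (Filter.Eventually.of_forall fun x => by
        rw [Real.norm_eq_abs, abs_of_nonneg (h0 x)]; exact h1 x)
  have key : ∀ (m : Measure X) [IsProbabilityMeasure m],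
      ∫ x, f x ∂m = ∫ t in Ioc (0:ℝ) 1, (m {a | t < f a}).toReal := by
    intro m _
    rw [(hint m).integral_eq_integral_meas_lt (Filter.Eventually.of_forall h0)]
    simp only [measureReal_def]
    rw [← Set.Ioc_union_Ioi_eq_Ioi (zero_le_one (α := ℝ))]
    have h2 : ∀ t ∈ Ioi (1:ℝ), (m {a | t < f a}).toReal = 0 := by
      intro t ht
      have he : {a | t < f a} = ∅ := by
        ext a; simp only [mem_setOf_eq, mem_empty_iff_false, iff_false, not_lt]
        exact (h1 a).trans (le_of_lt ht)
      simp [he]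
    rw [setIntegral_union (Set.Ioc_disjoint_Ioi le_rfl) measurableSet_Ioi (hintP m)
      ((integrable_congr ((ae_restrict_iff' measurableSet_Ioi).2
        (Filter.Eventually.of_forall h2))).2 (integrable_zero _ _ _))]
    rw [setIntegral_congr_fun measurableSet_Ioi h2]
    simp
  rw [key P, key Q]
  rw [← integral_sub (hintP P) (hintP Q)]
  calc |∫ t in Ioc (0:ℝ) 1, ((P {a | t < f a}).toReal - (Q {a | t < f a}).toReal)|
      ≤ ∫ t in Ioc (0:ℝ) 1, |(P {a | t < f a}).toReal - (Q {a | t < f a}).toReal| := by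
        simpa [Real.norm_eq_abs] using norm_integral_le_integral_norm
          (μ := volume.restrict (Ioc (0:ℝ) 1))
          (fun t => (P {a | t < f a}).toReal - (Q {a | t < f a}).toReal)
    _ ≤ ∫ _t in Ioc (0:ℝ) 1, tvDist P Q := by
        refine setIntegral_mono_on ((hintP P).sub (hintP Q)).abs (integrable_const _)
          measurableSet_Ioc fun t _ => ?_
        exact abs_sub_le_tvDist P Q (measurableSet_lt measurable_const hf)
    _ = tvDist P Q := by simp [Real.volume_Ioc]
end TV

section Chain
variable {𝒱 : Type*} [MeasurableSpace 𝒱] (κ : Kernel 𝒱 𝒱) [IsMarkovKernel κ]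

omit [IsMarkovKernel κ] in
lemma bind_ac {ν ν' : Measure 𝒱} (h : ν ≪ ν') : ν.bind κ ≪ ν'.bind κ := by
  intro s hs0
  obtain ⟨t, hst, htm, ht0⟩ := exists_measurable_superset_of_null hs0
  have h1 : ∫⁻ x, κ x t ∂ν' = 0 := by
    rw [← Measure.bind_apply htm κ.measurable.aemeasurable]; exact ht0
  rw [lintegral_eq_zero_iff (κ.measurable_coe htm)] at h1
  have h2 : (fun x => κ x t) =ᵐ[ν] 0 := h h1
  refine measure_mono_null hst ?_
  rw [Measure.bind_apply htm κ.measurable.aemeasurable, lintegral_eq_zero_iff (κ.measurable_coe htm)]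
  exact h2

omit [IsMarkovKernel κ] in
lemma chainLaw_ac {νb : Measure 𝒱} (hinv : νb.bind κ = νb) {ν : Measure 𝒱} (h : ν ≪ νb) :
    ∀ m, chainLaw κ ν m ≪ νb
  | 0 => h
  | m + 1 => by
      have h2 := bind_ac κ (chainLaw_ac hinv h m)
      rw [hinv] at h2
      exact h2

lemma chainLaw_prob (ν : Measure 𝒱) [IsProbabilityMeasure ν] (m : ℕ) :
    IsProbabilityMeasure (chainLaw κ ν m) := by
  induction m with
  | zero => rw [chainLaw]; infer_instance
  | succ m ih =>
      constructor
      rw [chainLaw, Measure.bind_apply MeasurableSet.univ κ.measurable.aemeasurable]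
      simp [ih.measure_univ]

omit [IsMarkovKernel κ] in
lemma bind_smul (c : ℝ≥0∞) (ν : Measure 𝒱) : (c • ν).bind κ = c • ν.bind κ := by
  ext s hs
  rw [Measure.bind_apply hs κ.measurable.aemeasurable, Measure.smul_apply, smul_eq_mul,
    Measure.bind_apply hs κ.measurable.aemeasurable, lintegral_smul_measure, smul_eq_mul]

omit [IsMarkovKernel κ] in
lemma chainLaw_smul (c : ℝ≥0∞) (ν : Measure 𝒱) (m : ℕ) :
    chainLaw κ (c • ν) m = c • chainLaw κ ν m := by
  induction m with
  | zero => rfl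
  | succ m ih => rw [chainLaw, ih, bind_smul, chainLaw]

end Chain

set_option maxHeartbeats 4000000 in
/-- Lemma 8, (iii) ⇒ (i): if for every initial distribution `ν ≪ ν̄` the law of the chain at
time `n` converges in total variation to the invariant distribution `ν̄`, then the stationary
chain is ergodic (its tail σ-algebra is trivial). -/
theorem ergodic_of_tv_convergence
    {Ω 𝒱 : Type*} {mΩ : MeasurableSpace Ω} [StandardBorelSpace Ω] [Nonempty Ω]
    [MeasurableSpace 𝒱]
    (μ : Measure Ω) [IsProbabilityMeasure μ]
    (V : ℕ → Ω → 𝒱) (hV : ∀ n, Measurable (V n))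
    (κ : Kernel 𝒱 𝒱) [IsMarkovKernel κ]
    (νbar : Measure 𝒱) [IsProbabilityMeasure νbar]
    -- `νbar` is invariant for `κ`
    (hinv : νbar.bind κ = νbar)
    -- the process has one-dimensional marginals `νbar` and transitions given by `κ`
    (hmarg : ∀ n, Measure.map (V n) μ = νbar)
    (hjoint : ∀ n, Measure.map (fun ω => (V n ω, V (n + 1) ω)) μ = νbar.compProd κ)
    -- stationarity: the law of the trajectory is shift-invariant
    (hstat : ∀ m, Measure.map (fun ω (i : ℕ) => V (i + m) ω) μ
      = Measure.map (fun ω (i : ℕ) => V i ω) μ)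
    -- Markov property: the future is conditionally independent of the past given the present
    (hMarkov : ∀ n, CondIndep (MeasurableSpace.comap (V n) inferInstance)
      (⨆ i : Fin n, MeasurableSpace.comap (V i) inferInstance)
      (⨆ k, MeasurableSpace.comap (V (n + 1 + k)) inferInstance)
      (measurable_iff_comap_le.mp (hV n)) μ)
    -- hypothesis (iii): total variation convergence from every `ν ≪ ν̄`
    (htv : ∀ ν : Measure 𝒱, IsProbabilityMeasure ν → ν ≪ νbar →
      Tendsto (fun n => tvDist (chainLaw κ ν n) νbar) atTop (nhds 0)) :
    ∀ E : Set Ω, MeasurableSet[tailSigma V] E → μ E = 0 ∨ μ E = 1 := by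
  intro E hE
  -- basic measurability facts
  have hcomap_le : ∀ n, MeasurableSpace.comap (V n) inferInstance ≤ mΩ :=
    fun n => (hV n).comap_le
  have hsup_le : (⨆ i, MeasurableSpace.comap (V i) inferInstance) ≤ mΩ := iSup_le hcomap_le
  have hEtail : ∀ n, MeasurableSet[⨆ k, MeasurableSpace.comap (V (n + k)) inferInstance] E := by
    intro n
    have h := iInf_le (fun n => ⨆ k, MeasurableSpace.comap (V (n + k)) inferInstance) n
    exact h E hE
  have hEsup : MeasurableSet[⨆ i, MeasurableSpace.comap (V i) inferInstance] E := by
    have h0 := hEtail 0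
    have he : (fun k => MeasurableSpace.comap (V (0 + k)) inferInstance)
        = fun k => MeasurableSpace.comap (V k) inferInstance := by
      funext k; rw [Nat.zero_add]
    rw [show (⨆ k, MeasurableSpace.comap (V (0 + k)) inferInstance)
        = ⨆ i, MeasurableSpace.comap (V i) inferInstance from by rw [he]] at h0
    exact h0
  have hEm : MeasurableSet E := hsup_le E hEsup
  -- the measures η n and densities ψ n
  set η : ℕ → Measure 𝒱 := fun n => Measure.map (V n) (μ.restrict E) with hηdef
  have hη_apply : ∀ n {A : Set 𝒱}, MeasurableSet A → η n A = μ (V n ⁻¹' A ∩ E) := by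
    intro n A hA
    rw [hηdef]
    simp only
    rw [Measure.map_apply (hV n) hA, Measure.restrict_apply ((hV n) hA)]
  have hη_le : ∀ n, η n ≤ νbar := by
    intro n
    refine Measure.le_iff.2 fun A hA => ?_
    rw [hη_apply n hA, ← hmarg n, Measure.map_apply (hV n) hA]
    exact measure_mono Set.inter_subset_left
  have hη_ac : ∀ n, η n ≪ νbar := fun n => Measure.absolutelyContinuous_of_le (hη_le n)
  haveI hη_fin : ∀ n, IsFiniteMeasure (η n) := fun n => isFiniteMeasure_of_le νbar (hη_le n)
  set ψ : ℕ → 𝒱 → ℝ≥0∞ := fun n x => min ((η n).rnDeriv νbar x) 1 with hψdef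
  have hψ_meas : ∀ n, Measurable (ψ n) :=
    fun n => (Measure.measurable_rnDeriv _ _).min measurable_const
  have hψ_le_one : ∀ n x, ψ n x ≤ 1 := fun n x => min_le_right _ _
  have hψ_lt_top : ∀ n x, ψ n x < ∞ := fun n x => lt_of_le_of_lt (hψ_le_one n x) ENNReal.one_lt_top
  have hψ_ae : ∀ n, ψ n =ᵐ[νbar] (η n).rnDeriv νbar := by
    intro n
    have hle1 : (η n).rnDeriv νbar ≤ᵐ[νbar] fun _ => 1 := by
      refine ae_le_of_forall_setLIntegral_le_of_sigmaFinite
        (Measure.measurable_rnDeriv _ _) fun s hs _ => ?_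
      rw [Measure.setLIntegral_rnDeriv (hη_ac n) s, setLIntegral_const]
      simpa using (Measure.le_iff.1 (hη_le n)) s hs
    filter_upwards [hle1] with x hx
    exact min_eq_left hx
  have hψ_int : ∀ n {A : Set 𝒱}, MeasurableSet A → ∫⁻ x in A, ψ n x ∂νbar = η n A := by
    intro n A hA
    rw [lintegral_congr_ae (ae_restrict_of_ae (hψ_ae n))]
    exact Measure.setLIntegral_rnDeriv (hη_ac n) A
  have hψ_total : ∀ n, ∫⁻ x, ψ n x ∂νbar = μ E := by
    intro n
    have h := hψ_int n MeasurableSet.univ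
    rw [Measure.restrict_univ] at h
    rw [h, hη_apply n MeasurableSet.univ]
    simp
  -- integrability helpers
  have hind_int : ∀ (s : Set Ω), MeasurableSet s →
      Integrable (s.indicator (fun _ => (1:ℝ))) μ :=
    fun s hs => (integrable_const (1:ℝ)).indicator hs
  have hg_meas : ∀ n, Measurable (fun ω => (ψ n (V n ω)).toReal) :=
    fun n => ((hψ_meas n).comp (hV n)).ennreal_toReal
  have hg_bd : ∀ n (ω : Ω), ‖(ψ n (V n ω)).toReal‖ ≤ 1 := by
    intro n ω
    rw [Real.norm_eq_abs, abs_of_nonneg ENNReal.toReal_nonneg]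
    simpa using ENNReal.toReal_mono ENNReal.one_ne_top (hψ_le_one n (V n ω))
  have hg_int : ∀ n, Integrable (fun ω => (ψ n (V n ω)).toReal) μ :=
    fun n => (integrable_const (1:ℝ)).mono' (hg_meas n).aestronglyMeasurable
      (Filter.Eventually.of_forall (hg_bd n))
  have hg_sm : ∀ n, StronglyMeasurable[MeasurableSpace.comap (V n) inferInstance]
      (fun ω => (ψ n (V n ω)).toReal) := by
    intro n
    have h1 : Measurable[MeasurableSpace.comap (V n) inferInstance] (V n) :=
      Measurable.of_comap_le le_rfl
    have h2 : @Measurable Ω ℝ (MeasurableSpace.comap (V n) inferInstance) _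
        (fun ω => (ψ n (V n ω)).toReal) :=
      Measurable.ennreal_toReal ((hψ_meas n).comp h1)
    exact h2.stronglyMeasurable
  -- the conditional expectation of 1_E given V n is ψ n ∘ V n
  have cond_eq : ∀ n, (fun ω => (ψ n (V n ω)).toReal)
      =ᵐ[μ] μ⟦E | MeasurableSpace.comap (V n) inferInstance⟧ := by
    intro n
    refine ae_eq_condExp_of_forall_setIntegral_eq (hcomap_le n) (hind_int E hEm)
      (fun s _ _ => (hg_int n).integrableOn) ?_ ?_
    · intro s hs _
      rw [MeasurableSpace.measurableSet_comap] at hs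
      obtain ⟨A, hA, rfl⟩ := hs
      have hsm : MeasurableSet (V n ⁻¹' A) := (hV n) hA
      have hrhs : ∫ x in V n ⁻¹' A, E.indicator (fun _ => (1:ℝ)) x ∂μ
          = (μ (E ∩ V n ⁻¹' A)).toReal := by
        have h' := integral_indicator_one (μ := μ.restrict (V n ⁻¹' A)) hEm
        rw [measureReal_def, Measure.restrict_apply hEm] at h'
        exact h'
      have hlhs : ∫ x in V n ⁻¹' A, (ψ n (V n x)).toReal ∂μ = (η n A).toReal := by
        rw [← setIntegral_map hA ((hψ_meas n).ennreal_toReal).aestronglyMeasurable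
          (hV n).aemeasurable, hmarg n,
          integral_toReal ((hψ_meas n).aemeasurable.restrict)
            (Filter.Eventually.of_forall fun x => hψ_lt_top n x),
          hψ_int n hA]
      rw [hrhs, hlhs, hη_apply n hA, Set.inter_comm]
    · exact (hg_sm n).aestronglyMeasurable
  -- measurability of the kernel integral
  have hkint_meas : ∀ n, Measurable (fun x => ∫⁻ y, ψ n y ∂κ x) :=
    fun n => Measurable.lintegral_kernel_prod_right' (κ := κ) ((hψ_meas n).comp measurable_snd)
  -- the Markov recursion: η n A = ∫_A κ(ψ (n+1)) dν̄
  have hL3 : ∀ n {A : Set 𝒱}, MeasurableSet A →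
      η n A = ∫⁻ x in A, ∫⁻ y, ψ (n+1) y ∂κ x ∂νbar := by
    intro n A hA
    have hm' : MeasurableSpace.comap (V (n+1)) inferInstance ≤ mΩ := hcomap_le (n+1)
    have hm₁ : (⨆ i : Fin (n+1), MeasurableSpace.comap (V i) inferInstance) ≤ mΩ :=
      iSup_le fun i => hcomap_le i
    have hm₂ : (⨆ k, MeasurableSpace.comap (V (n+1+1+k)) inferInstance) ≤ mΩ :=
      iSup_le fun k => hcomap_le _
    have hCI := (condIndep_iff _ _ _ hm' hm₁ hm₂ μ).mp (hMarkov (n+1))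
    have ht1 : MeasurableSet[⨆ i : Fin (n+1), MeasurableSpace.comap (V i) inferInstance]
        (V n ⁻¹' A) := by
      have h : MeasurableSet[MeasurableSpace.comap (V n) inferInstance] (V n ⁻¹' A) :=
        ⟨A, hA, rfl⟩
      exact le_iSup (fun i : Fin (n+1) => MeasurableSpace.comap (V i) inferInstance)
        ⟨n, Nat.lt_succ_self n⟩ _ h
    have ht2 : MeasurableSet[⨆ k, MeasurableSpace.comap (V (n+1+1+k)) inferInstance] E := by
      have h := hEtail (n+2)
      have he : (fun k => MeasurableSpace.comap (V (n+2+k)) inferInstance)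
          = fun k => MeasurableSpace.comap (V (n+1+1+k)) inferInstance := by
        funext k
        have hk : n+2+k = n+1+1+k := by omega
        rw [hk]
      rw [show (⨆ k, MeasurableSpace.comap (V (n+2+k)) inferInstance)
          = ⨆ k, MeasurableSpace.comap (V (n+1+1+k)) inferInstance from by rw [he]] at h
      exact h
    have hkey := hCI (V n ⁻¹' A) E ht1 ht2
    have hsm : MeasurableSet (V n ⁻¹' A) := (hV n) hA
    set g : Ω → ℝ := fun ω => (ψ (n+1) (V (n+1) ω)).toReal with hgdef
    set F : 𝒱 × 𝒱 → ℝ :=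
      fun q => (A.indicator (fun _ => (1:ℝ)) q.1) * (ψ (n+1) q.2).toReal with hFdef
    set G : 𝒱 × 𝒱 → ℝ≥0∞ :=
      fun q => (A.indicator (fun _ => (1:ℝ≥0∞)) q.1) * ψ (n+1) q.2 with hGdef
    have hG_meas : Measurable G :=
      ((measurable_const.indicator hA).comp measurable_fst).mul
        ((hψ_meas (n+1)).comp measurable_snd)
    have e1 : (μ (V n ⁻¹' A ∩ E)).toReal
        = ∫ ω, (μ⟦V n ⁻¹' A ∩ E | MeasurableSpace.comap (V (n+1)) inferInstance⟧) ω ∂μ := by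
      rw [integral_condExp hm']
      exact (integral_indicator_one (μ := μ) (hsm.inter hEm)).symm
    have e2 : ∫ ω, (μ⟦V n ⁻¹' A ∩ E | MeasurableSpace.comap (V (n+1)) inferInstance⟧) ω ∂μ
        = ∫ ω, (g * fun ω' =>
            (μ⟦V n ⁻¹' A | MeasurableSpace.comap (V (n+1)) inferInstance⟧) ω') ω ∂μ := by
      refine integral_congr_ae ?_
      filter_upwards [hkey, cond_eq (n+1)] with ω h1 h2
      rw [h1]
      simp only [Pi.mul_apply]
      rw [← h2, mul_comm]
    have hprod_int : Integrable (g * (V n ⁻¹' A).indicator (fun _ => (1:ℝ))) μ :=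
      Integrable.bdd_mul (hind_int _ hsm) (hg_meas (n+1)).aestronglyMeasurable
        (Filter.Eventually.of_forall (hg_bd (n+1)))
    have e3 : ∫ ω, (g * fun ω' =>
          (μ⟦V n ⁻¹' A | MeasurableSpace.comap (V (n+1)) inferInstance⟧) ω') ω ∂μ
        = ∫ ω, (g * (V n ⁻¹' A).indicator (fun _ => (1:ℝ))) ω ∂μ := by
      have hmul := condExp_stronglyMeasurable_mul_of_bound hm' (hg_sm (n+1))
        (hind_int _ hsm) 1 (Filter.Eventually.of_forall (hg_bd (n+1)))
      calc ∫ ω, (g * fun ω' =>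
              (μ⟦V n ⁻¹' A | MeasurableSpace.comap (V (n+1)) inferInstance⟧) ω') ω ∂μ
          = ∫ ω, (μ[(g * (V n ⁻¹' A).indicator (fun _ => (1:ℝ)))
              | MeasurableSpace.comap (V (n+1)) inferInstance]) ω ∂μ :=
            (integral_congr_ae hmul).symm
        _ = ∫ ω, (g * (V n ⁻¹' A).indicator (fun _ => (1:ℝ))) ω ∂μ :=
            integral_condExp hm'
    have e4 : ∫ ω, (g * (V n ⁻¹' A).indicator (fun _ => (1:ℝ))) ω ∂μ
        = ∫ ω, F (V n ω, V (n+1) ω) ∂μ := by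
      refine integral_congr_ae (Filter.Eventually.of_forall fun ω => ?_)
      by_cases h : V n ω ∈ A <;>
        simp [hFdef, hgdef, Set.indicator_apply, h, Set.mem_preimage]
    have hpair : Measurable (fun ω => (V n ω, V (n+1) ω)) := (hV n).prodMk (hV (n+1))
    have hFG : ∀ q, F q = (G q).toReal := by
      intro q
      by_cases h : q.1 ∈ A <;> simp [hFdef, hGdef, Set.indicator_apply, h]
    have hF_meas : Measurable F := by
      have : F = fun q => (G q).toReal := funext hFG
      rw [this]
      exact hG_meas.ennreal_toReal
    have e5 : ∫ ω, F (V n ω, V (n+1) ω) ∂μ = ∫ q, F q ∂(νbar.compProd κ) := by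
      rw [← hjoint n]
      exact (integral_map hpair.aemeasurable hF_meas.aestronglyMeasurable).symm
    have hG_lt_top : ∀ q, G q < ∞ := by
      intro q
      by_cases h : q.1 ∈ A
      · simpa [hGdef, Set.indicator_apply, h] using hψ_lt_top (n+1) q.2
      · simp [hGdef, Set.indicator_apply, h]
    have e6 : ∫ q, F q ∂(νbar.compProd κ) = (∫⁻ q, G q ∂(νbar.compProd κ)).toReal := by
      rw [funext hFG]
      exact integral_toReal hG_meas.aemeasurable
        (Filter.Eventually.of_forall hG_lt_top)
    have e7 : ∫⁻ q, G q ∂(νbar.compProd κ)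
        = ∫⁻ x in A, ∫⁻ y, ψ (n+1) y ∂κ x ∂νbar := by
      rw [Measure.lintegral_compProd hG_meas]
      have hinner : ∀ x, ∫⁻ y, G (x, y) ∂κ x
          = A.indicator (fun x' => ∫⁻ y, ψ (n+1) y ∂κ x') x := by
        intro x
        by_cases h : x ∈ A
        · simp only [hGdef, Set.indicator_apply, h, if_true, one_mul]
          rw [lintegral_const_mul _ (hψ_meas (n+1))]
          simp [h]
        · simp only [hGdef, Set.indicator_apply, h, if_false, zero_mul]
          simp [h, lintegral_zero]
      rw [lintegral_congr hinner, lintegral_indicator hA]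
    have hfin1 : η n A ≠ ∞ := measure_ne_top _ _
    have hfin2 : (∫⁻ x in A, ∫⁻ y, ψ (n+1) y ∂κ x ∂νbar) ≠ ∞ := by
      have hb : ∀ x, ∫⁻ y, ψ (n+1) y ∂κ x ≤ 1 := by
        intro x
        calc ∫⁻ y, ψ (n+1) y ∂κ x ≤ ∫⁻ _, 1 ∂κ x := lintegral_mono (hψ_le_one (n+1))
          _ = 1 := by simp
      refine ne_of_lt (lt_of_le_of_lt (lintegral_mono hb) ?_)
      rw [setLIntegral_one]
      exact measure_lt_top _ _
    refine (ENNReal.toReal_eq_toReal_iff' hfin1 hfin2).mp ?_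
    rw [hη_apply n hA]
    rw [e1, e2, e3, e4, e5, e6, e7]
  have hg1 : ∀ j (x : 𝒱), (ψ j x).toReal ≤ 1 := fun j x => by
    simpa using ENNReal.toReal_mono ENNReal.one_ne_top (hψ_le_one j x)
  have hκψ_le_one : ∀ n x, ∫⁻ y, ψ n y ∂κ x ≤ 1 := by
    intro n x
    calc ∫⁻ y, ψ n y ∂κ x ≤ ∫⁻ _, 1 ∂κ x := lintegral_mono (hψ_le_one n)
      _ = 1 := by simp
  -- density recursion
  have hrec : ∀ n, ψ n =ᵐ[νbar] fun x => ∫⁻ y, ψ (n+1) y ∂κ x := by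
    intro n
    refine ae_eq_of_forall_setLIntegral_eq_of_sigmaFinite (hψ_meas n) (hkint_meas (n+1))
      fun s hs _ => ?_
    rw [hψ_int n hs, hL3 n hs]
  -- transport along the chain
  have htrans : ∀ (ρ : Measure 𝒱), ρ ≪ νbar → ∀ n m,
      ∫⁻ x, ψ (n+m) x ∂(chainLaw κ ρ m) = ∫⁻ x, ψ n x ∂ρ := by
    intro ρ hρ n m
    induction m with
    | zero => rfl
    | succ m ih =>
        rw [chainLaw, Measure.lintegral_bind κ.measurable.aemeasurable (hψ_meas (n+(m+1))).aemeasurable]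
        have h1 : (fun x => ∫⁻ y, ψ (n+m+1) y ∂κ x) =ᵐ[chainLaw κ ρ m] ψ (n+m) :=
          ((chainLaw_ac κ hinv hρ m).ae_eq (hrec (n+m))).symm
        rw [show (n+(m+1)) = (n+m)+1 from rfl]
        rw [lintegral_congr_ae h1]
        exact ih
  -- η n is proportional to νbar
  have hconst : ∀ n {A : Set 𝒱}, MeasurableSet A → η n A = μ E * νbar A := by
    intro n A hA
    by_cases h0 : νbar A = 0
    · have h1 : η n A ≤ νbar A := Measure.le_iff.1 (hη_le n) A hA
      rw [h0] at h1
      rw [le_antisymm h1 zero_le, h0, mul_zero]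
    · have hc1 : νbar A ≠ ∞ := measure_ne_top _ _
      set ν : Measure 𝒱 := (νbar A)⁻¹ • νbar.restrict A with hνdef
      haveI hν_prob : IsProbabilityMeasure ν := by
        constructor
        rw [hνdef, Measure.smul_apply, Measure.restrict_apply_univ, smul_eq_mul]
        exact ENNReal.inv_mul_cancel h0 hc1
      have hν_ac : ν ≪ νbar := by
        intro s hs
        rw [hνdef, Measure.smul_apply, smul_eq_mul]
        refine mul_eq_zero.mpr (Or.inr ?_)
        exact le_antisymm ((Measure.restrict_apply_le A s).trans hs.le) zero_le
      have hseq : ∀ m, |((νbar A)⁻¹ * η n A).toReal - (μ E).toReal|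
          ≤ tvDist (chainLaw κ ν m) νbar := by
        intro m
        haveI := chainLaw_prob κ ν m
        have h1 : ∫⁻ x, ψ (n+m) x ∂(chainLaw κ ν m) = (νbar A)⁻¹ * η n A := by
          rw [htrans ν hν_ac n m, hνdef, lintegral_smul_measure]
          congr 1
          exact hψ_int n hA
        have h2 : ∫⁻ x, ψ (n+m) x ∂νbar = μ E := hψ_total (n+m)
        have h3 := abs_integral_sub_le_tvDist (chainLaw κ ν m) νbar
          ((hψ_meas (n+m)).ennreal_toReal) (fun x => ENNReal.toReal_nonneg)
          (fun x => hg1 (n+m) x)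
        rw [integral_toReal (hψ_meas (n+m)).aemeasurable
            (Filter.Eventually.of_forall (hψ_lt_top (n+m))),
          integral_toReal (hψ_meas (n+m)).aemeasurable
            (Filter.Eventually.of_forall (hψ_lt_top (n+m))), h1, h2] at h3
        exact h3
      have h5 : |((νbar A)⁻¹ * η n A).toReal - (μ E).toReal| ≤ 0 :=
        ge_of_tendsto (htv ν hν_prob hν_ac) (Filter.Eventually.of_forall hseq)
      have h6 : ((νbar A)⁻¹ * η n A).toReal = (μ E).toReal := by
        have := abs_nonneg (((νbar A)⁻¹ * η n A).toReal - (μ E).toReal)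
        have h7 : |((νbar A)⁻¹ * η n A).toReal - (μ E).toReal| = 0 := le_antisymm h5 this
        have := abs_eq_zero.mp h7
        linarith
      have hfin : (νbar A)⁻¹ * η n A ≠ ∞ :=
        ENNReal.mul_ne_top (ENNReal.inv_ne_top.mpr h0) (measure_ne_top _ _)
      have h8 : (νbar A)⁻¹ * η n A = μ E :=
        (ENNReal.toReal_eq_toReal_iff' hfin (measure_ne_top _ _)).mp h6
      calc η n A = νbar A * ((νbar A)⁻¹ * η n A) := by
            rw [← mul_assoc, ENNReal.mul_inv_cancel h0 hc1, one_mul]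
        _ = νbar A * μ E := by rw [h8]
        _ = μ E * νbar A := mul_comm _ _
  -- conditional probability of E given V n is constant
  have hcondE : ∀ n, (fun _ : Ω => (μ E).toReal)
      =ᵐ[μ] μ⟦E | MeasurableSpace.comap (V n) inferInstance⟧ := by
    intro n
    refine ae_eq_condExp_of_forall_setIntegral_eq (hcomap_le n) (hind_int E hEm)
      (fun s _ _ => (integrable_const _).integrableOn) ?_ ?_
    · intro s hs _
      rw [MeasurableSpace.measurableSet_comap] at hs
      obtain ⟨A, hA, rfl⟩ := hs
      have hsm : MeasurableSet (V n ⁻¹' A) := (hV n) hA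
      have hrhs : ∫ x in V n ⁻¹' A, E.indicator (fun _ => (1:ℝ)) x ∂μ
          = (μ E * νbar A).toReal := by
        have h' := integral_indicator_one (μ := μ.restrict (V n ⁻¹' A)) hEm
        rw [measureReal_def, Measure.restrict_apply hEm] at h'
        rw [Set.inter_comm, ← hη_apply n hA, hconst n hA] at h'
        exact h'
      rw [hrhs, setIntegral_const]
      have hμs : μ (V n ⁻¹' A) = νbar A := by
        rw [← hmarg n, Measure.map_apply (hV n) hA]
      rw [measureReal_def, hμs, smul_eq_mul, ENNReal.toReal_mul, mul_comm]
    · exact stronglyMeasurable_const.aestronglyMeasurable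
  -- independence of E from (past, present) blocks
  have hD : ∀ n (s₁ : Set Ω),
      MeasurableSet[⨆ i : Fin n, MeasurableSpace.comap (V i) inferInstance] s₁ →
      ∀ {A : Set 𝒱}, MeasurableSet A →
      μ (s₁ ∩ V n ⁻¹' A ∩ E) = μ E * μ (s₁ ∩ V n ⁻¹' A) := by
    intro n s₁ hs₁ A hA
    have hm' : MeasurableSpace.comap (V n) inferInstance ≤ mΩ := hcomap_le n
    have hm₁ : (⨆ i : Fin n, MeasurableSpace.comap (V i) inferInstance) ≤ mΩ :=
      iSup_le fun i => hcomap_le i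
    have hm₂ : (⨆ k, MeasurableSpace.comap (V (n+1+k)) inferInstance) ≤ mΩ :=
      iSup_le fun k => hcomap_le _
    have hCI := (condIndep_iff _ _ _ hm' hm₁ hm₂ μ).mp (hMarkov n)
    have hkey := hCI s₁ E hs₁ (hEtail (n+1))
    have hs₁m : MeasurableSet s₁ := hm₁ s₁ hs₁
    have hsA' : MeasurableSet[MeasurableSpace.comap (V n) inferInstance] (V n ⁻¹' A) :=
      ⟨A, hA, rfl⟩
    have hsAm : MeasurableSet (V n ⁻¹' A) := (hV n) hA
    have e1 : ∫ ω in V n ⁻¹' A,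
        (μ⟦s₁ ∩ E | MeasurableSpace.comap (V n) inferInstance⟧) ω ∂μ
        = (μ (s₁ ∩ E ∩ V n ⁻¹' A)).toReal := by
      rw [setIntegral_condExp hm' (hind_int _ (hs₁m.inter hEm)) hsA']
      have h' := integral_indicator_one (μ := μ.restrict (V n ⁻¹' A)) (hs₁m.inter hEm)
      rw [measureReal_def, Measure.restrict_apply (hs₁m.inter hEm)] at h'
      exact h'
    have e2 : ∫ ω in V n ⁻¹' A,
        (μ⟦s₁ ∩ E | MeasurableSpace.comap (V n) inferInstance⟧) ω ∂μ
        = (μ E).toReal * ∫ ω in V n ⁻¹' A,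
            (μ⟦s₁ | MeasurableSpace.comap (V n) inferInstance⟧) ω ∂μ := by
      have hae : (μ⟦s₁ ∩ E | MeasurableSpace.comap (V n) inferInstance⟧)
          =ᵐ[μ] fun ω => (μ E).toReal
            * (μ⟦s₁ | MeasurableSpace.comap (V n) inferInstance⟧) ω := by
        filter_upwards [hkey, hcondE n] with ω h1 h2
        rw [h1, Pi.mul_apply, ← h2, mul_comm]
      rw [setIntegral_congr_ae hsAm (hae.mono fun ω h _ => h)]
      rw [integral_const_mul]
    have e3 : ∫ ω in V n ⁻¹' A,
        (μ⟦s₁ | MeasurableSpace.comap (V n) inferInstance⟧) ω ∂μ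
        = (μ (s₁ ∩ V n ⁻¹' A)).toReal := by
      rw [setIntegral_condExp hm' (hind_int _ hs₁m) hsA']
      have h' := integral_indicator_one (μ := μ.restrict (V n ⁻¹' A)) hs₁m
      rw [measureReal_def, Measure.restrict_apply hs₁m] at h'
      exact h'
    have e4 : (μ (s₁ ∩ V n ⁻¹' A ∩ E)).toReal = (μ E * μ (s₁ ∩ V n ⁻¹' A)).toReal := by
      rw [Set.inter_right_comm, ← e1, e2, e3, ENNReal.toReal_mul]
    exact (ENNReal.toReal_eq_toReal_iff' (measure_ne_top _ _)
      (ENNReal.mul_ne_top (measure_ne_top _ _) (measure_ne_top _ _))).mp e4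
  -- Dynkin argument: E is independent of the whole σ-algebra generated by the V i
  have hfinal : ∀ t : Set Ω,
      MeasurableSet[⨆ i, MeasurableSpace.comap (V i) inferInstance] t →
      μ (t ∩ E) = μ E * μ t := by
    have hgen : (⨆ i, MeasurableSpace.comap (V i) inferInstance)
        = MeasurableSpace.generateFrom (piiUnionInter
          (fun n => {s : Set Ω | MeasurableSet[MeasurableSpace.comap (V n) inferInstance] s})
          Set.univ) := by
      have h := generateFrom_piiUnionInter_measurableSet
        (fun n : ℕ => MeasurableSpace.comap (V n) (inferInstance : MeasurableSpace 𝒱)) Set.univ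
      rw [iSup_univ] at h
      exact h.symm
    intro t ht
    refine MeasurableSpace.induction_on_inter
      (m := ⨆ i, MeasurableSpace.comap (V i) inferInstance)
      (C := fun t _ => μ (t ∩ E) = μ E * μ t) hgen
      (isPiSystem_piiUnionInter _
        (fun n => @MeasurableSpace.isPiSystem_measurableSet Ω (MeasurableSpace.comap (V n) inferInstance))
        Set.univ) (by simp) ?_ ?_ ?_ t ht
    · rintro t ⟨u, -, f, hf, rfl⟩
      rcases u.eq_empty_or_nonempty with hu | hne
      · subst hu
        simp [measure_univ]
      · set n := u.max' hne with hndef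
        have hmem : n ∈ u := u.max'_mem hne
        have hfn : MeasurableSet[MeasurableSpace.comap (V n) inferInstance] (f n) :=
          hf n hmem
        rw [MeasurableSpace.measurableSet_comap] at hfn
        obtain ⟨A, hA, hfnA⟩ := hfn
        set s₁ : Set Ω := ⋂ x ∈ u.erase n, f x with hs₁def
        have hs₁ : MeasurableSet[⨆ i : Fin n, MeasurableSpace.comap (V i) inferInstance] s₁ := by
          refine MeasurableSet.biInter (u.erase n).countable_toSet fun x hx => ?_
          have hxu : x ∈ u := Finset.mem_of_mem_erase hx
          have hxn : x < n := lt_of_le_of_ne (u.le_max' x hxu) (Finset.ne_of_mem_erase hx)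
          exact le_iSup (fun i : Fin n => MeasurableSpace.comap (V i) inferInstance)
            ⟨x, hxn⟩ _ (hf x hxu)
        have hdec : (⋂ x ∈ u, f x) = s₁ ∩ V n ⁻¹' A := by
          conv_lhs => rw [← Finset.insert_erase hmem]
          rw [Finset.set_biInter_insert, hfnA, Set.inter_comm]
        rw [hdec]
        exact hD n s₁ hs₁ hA
    · intro t ht hC
      have htm : MeasurableSet t := hsup_le t ht
      have h1 : μ (t ∩ E) + μ (tᶜ ∩ E) = μ E := by
        rw [Set.inter_comm t E, Set.inter_comm tᶜ E, ← Set.diff_eq]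
        exact measure_inter_add_diff E htm
      have h2 : μ (tᶜ ∩ E) = μ E - μ E * μ t := by
        rw [← hC]
        rw [add_comm] at h1
        exact ENNReal.eq_sub_of_add_eq (measure_ne_top _ _) h1
      rw [h2, measure_compl htm (measure_ne_top _ _), measure_univ,
        ENNReal.mul_sub (fun _ _ => measure_ne_top _ _), mul_one]
    · intro f hdisj hm hC
      rw [Set.iUnion_inter, measure_iUnion
        (hdisj.mono fun i j h => h.mono Set.inter_subset_left Set.inter_subset_left)
        (fun i => (hsup_le _ (hm i)).inter hEm)]
      rw [measure_iUnion hdisj (fun i => hsup_le _ (hm i))]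
      rw [← ENNReal.tsum_mul_left]
      exact tsum_congr fun i => hC i
  -- conclusion
  have hEE : μ E = μ E * μ E := by
    have := hfinal E hEsup
    rwa [Set.inter_self] at this
  rcases eq_or_ne (μ E) 0 with h0 | h0
  · exact Or.inl h0
  · right
    have h1 : μ E * 1 = μ E * μ E := by rw [mul_one]; exact hEE
    exact ((ENNReal.mul_right_inj h0 (measure_ne_top _ _)).mp h1).symm
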